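/- Let k ∈ ℤ and let α, β : ℂ → ℂ be analytic at z with α(z) ≠ 0, k ≠ −1, and α(z)·β'(z) − α'(z)·β(z) ≠ 0. Then z + 2·(β/α)(z)/((β/α))'(z) = z + (2k+2)·α(z)·β(z)/((α·β)'(z) + k·α(z)·β'(z) − (k+2)·α'(z)·β(z)); that is, the weight-2 φ-operator of the quotient β/α coincides with the biweight φ-operator of the pair (α·β, [α,β]₁), where [α,β]₁ = k·α·β' − (k+2)·α'·β is the first Rankin–Cohen bracket of forms of weights k and k+2. -/

import Mathlib

/-- The paper's identity `φ_{β/α} = φ_{αβ, [α,β]₁}`: the weight-2 φ-operator of the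
quotient `β/α` coincides with the biweight φ-operator of the pair `(α·β, [α,β]₁)`,
where `[α,β]₁ = k·α·β' − (k+2)·α'·β` is the first Rankin–Cohen bracket of forms of
weights `k` and `k+2`. -/
theorem phi_quotient_eq_biweight_phi
    (k : ℤ) (α β : ℂ → ℂ) (z : ℂ)
    (hα : AnalyticAt ℂ α z) (hβ : AnalyticAt ℂ β z)
    (hαz : α z ≠ 0) (hk : k ≠ -1)
    (hW : α z * deriv β z - deriv α z * β z ≠ 0) :
    z + 2 * (β z / α z) / deriv (fun w => β w / α w) z
      = z + (2 * (k : ℂ) + 2) * α z * β z /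
          (deriv (fun w => α w * β w) z
            + (k : ℂ) * α z * deriv β z - ((k : ℂ) + 2) * deriv α z * β z) := by
  have hαd := hα.differentiableAt
  have hβd := hβ.differentiableAt
  rw [deriv_fun_div hβd hαd hαz, deriv_fun_mul hαd hβd]
  have hk1 : (k : ℂ) + 1 ≠ 0 := by
    intro h
    apply hk
    have h2 : (k : ℂ) = ((-1 : ℤ) : ℂ) := by push_cast; linear_combination h
    exact_mod_cast h2
  have hW' : deriv β z * α z - β z * deriv α z ≠ 0 := by
    intro h; apply hW; linear_combination h
  congr 1
  have e1 : 2 * (β z / α z) / ((deriv β z * α z - β z * deriv α z) / α z ^ 2)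
      = 2 * α z * β z / (deriv β z * α z - β z * deriv α z) := by
    field_simp
  rw [e1, show deriv α z * β z + α z * deriv β z + (k:ℂ) * α z * deriv β z
      - ((k:ℂ) + 2) * deriv α z * β z
      = ((k:ℂ) + 1) * (deriv β z * α z - β z * deriv α z) by ring,
    show (2 * (k:ℂ) + 2) * α z * β z = ((k:ℂ) + 1) * (2 * α z * β z) by ring,
    mul_div_mul_left _ _ hk1]
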